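/- Let F: ℂ × H → ℂ be a meromorphic Jacobi form of index m and weight k over L ⋊ Γ, where L ⊂ ℂ is a lattice preserved by Γ ⊂ SL(2,ℤ), whose only possible polar divisors in ℂ × H are of the form t = (cτ + d)/l for integers c, d, l with l ≠ 0. If for every γ ∈ SL(2,ℤ) the transformed function F(γ(t,τ))|_{m,k} := (cτ+d)^{−k} e^{−2πimct²/(cτ+d)} F(t/(cτ+d), (aτ+b)/(cτ+d)) is holomorphic for all (t, τ) ∈ ℝ × H, then F is holomorphic on all of ℂ × H. -/

import Mathlib

open Complex

/-- The entries `a, b, c, d` of `γ ∈ SL(2,ℤ)`, as complex numbers. -/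
def slA (γ : Matrix.SpecialLinearGroup (Fin 2) ℤ) : ℂ := ((γ : Matrix (Fin 2) (Fin 2) ℤ) 0 0 : ℂ)
def slB (γ : Matrix.SpecialLinearGroup (Fin 2) ℤ) : ℂ := ((γ : Matrix (Fin 2) (Fin 2) ℤ) 0 1 : ℂ)
def slC (γ : Matrix.SpecialLinearGroup (Fin 2) ℤ) : ℂ := ((γ : Matrix (Fin 2) (Fin 2) ℤ) 1 0 : ℂ)
def slD (γ : Matrix.SpecialLinearGroup (Fin 2) ℤ) : ℂ := ((γ : Matrix (Fin 2) (Fin 2) ℤ) 1 1 : ℂ)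

/-- The transformed function `F(γ(t,τ))|_{m,k}
  = (cτ+d)^{-k} e^{-2πimct²/(cτ+d)} F(t/(cτ+d), (aτ+b)/(cτ+d))`. -/
noncomputable def slashAction (F : ℂ → ℂ → ℂ) (m : ℝ) (k : ℤ)
    (γ : Matrix.SpecialLinearGroup (Fin 2) ℤ) (p : ℂ × ℂ) : ℂ :=
  (slC γ * p.2 + slD γ) ^ (-k) *
    Complex.exp (-(2 * (Real.pi : ℂ) * Complex.I * (m : ℂ) * slC γ * p.1 ^ 2 /
      (slC γ * p.2 + slD γ))) *
    F (p.1 / (slC γ * p.2 + slD γ)) ((slA γ * p.2 + slB γ) / (slC γ * p.2 + slD γ))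

def mkSL (a b c d : ℤ) (h : a * d - b * c = 1) : Matrix.SpecialLinearGroup (Fin 2) ℤ :=
  ⟨!![a, b; c, d], by rw [Matrix.det_fin_two_of]; exact h⟩

lemma slA_mk (a b c d : ℤ) (h : a * d - b * c = 1) : slA (mkSL a b c d h) = a := rfl
lemma slB_mk (a b c d : ℤ) (h : a * d - b * c = 1) : slB (mkSL a b c d h) = b := rfl
lemma slC_mk (a b c d : ℤ) (h : a * d - b * c = 1) : slC (mkSL a b c d h) = c := rfl
lemma slD_mk (a b c d : ℤ) (h : a * d - b * c = 1) : slD (mkSL a b c d h) = d := rfl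

lemma sl_det (γ : Matrix.SpecialLinearGroup (Fin 2) ℤ) :
    slA γ * slD γ - slB γ * slC γ = 1 := by
  have h := Matrix.det_fin_two (γ : Matrix (Fin 2) (Fin 2) ℤ)
  rw [Matrix.SpecialLinearGroup.det_coe] at h
  have : ((γ : Matrix (Fin 2) (Fin 2) ℤ) 0 0 : ℂ) * ((γ : Matrix (Fin 2) (Fin 2) ℤ) 1 1 : ℂ)
      - ((γ : Matrix (Fin 2) (Fin 2) ℤ) 0 1 : ℂ) * ((γ : Matrix (Fin 2) (Fin 2) ℤ) 1 0 : ℂ) = 1 := by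
    exact_mod_cast congrArg (fun z : ℤ => (z : ℂ)) h.symm
  simpa [slA, slB, slC, slD] using this

lemma sl_w_ne_zero (γ : Matrix.SpecialLinearGroup (Fin 2) ℤ) {τ : ℂ} (hτ : 0 < τ.im) :
    slA γ - slC γ * τ ≠ 0 := by
  set a : ℤ := (γ : Matrix (Fin 2) (Fin 2) ℤ) 0 0 with ha
  set c : ℤ := (γ : Matrix (Fin 2) (Fin 2) ℤ) 1 0 with hc
  intro hz
  by_cases hc0 : c = 0
  · have hA : (slA γ : ℂ) = 0 := by
      rw [show slC γ = ((c : ℤ) : ℂ) from rfl, hc0] at hz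
      simpa using hz
    have ha0 : a = 0 := by
      have : ((a : ℤ) : ℂ) = 0 := hA
      exact_mod_cast this
    have hdet := Matrix.det_fin_two (γ : Matrix (Fin 2) (Fin 2) ℤ)
    rw [Matrix.SpecialLinearGroup.det_coe] at hdet
    rw [← ha, ← hc] at hdet
    rw [ha0, hc0] at hdet
    simp at hdet
  · have him : (slA γ - slC γ * τ).im = -((c : ℝ) * τ.im) := by
      simp [slA, slC, ← ha, ← hc, Complex.sub_im, Complex.mul_im]
    rw [hz] at him
    simp at him
    rcases him with h | h
    · exact hc0 (by exact_mod_cast h)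
    · linarith

lemma sl_im_psi (γ : Matrix.SpecialLinearGroup (Fin 2) ℤ) {τ : ℂ} (hτ : 0 < τ.im) :
    0 < ((slD γ * τ - slB γ) / (slA γ - slC γ * τ)).im := by
  have hw := sl_w_ne_zero γ hτ
  have hN : 0 < Complex.normSq (slA γ - slC γ * τ) := by
    simpa [Complex.normSq_pos] using hw
  set a : ℤ := (γ : Matrix (Fin 2) (Fin 2) ℤ) 0 0 with ha
  set b : ℤ := (γ : Matrix (Fin 2) (Fin 2) ℤ) 0 1 with hb
  set c : ℤ := (γ : Matrix (Fin 2) (Fin 2) ℤ) 1 0 with hc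
  set d : ℤ := (γ : Matrix (Fin 2) (Fin 2) ℤ) 1 1 with hd
  have hdet : a * d - b * c = 1 := by
    have h := Matrix.det_fin_two (γ : Matrix (Fin 2) (Fin 2) ℤ)
    rw [Matrix.SpecialLinearGroup.det_coe] at h
    rw [← ha, ← hb, ← hc, ← hd] at h
    linarith [h]
  have hdetR : (a : ℝ) * d - (b : ℝ) * c = 1 := by exact_mod_cast hdet
  rw [Complex.div_im]
  rw [div_sub_div_same]
  apply div_pos _ hN
  have : (slD γ * τ - slB γ).im * (slA γ - slC γ * τ).re -
      (slD γ * τ - slB γ).re * (slA γ - slC γ * τ).im = τ.im := by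
    simp only [slA, slB, slC, slD, ← ha, ← hb, ← hc, ← hd,
      Complex.sub_im, Complex.sub_re, Complex.mul_im, Complex.mul_re,
      Complex.intCast_im, Complex.intCast_re]
    ring_nf
    linear_combination τ.im * hdetR
  rw [this]; exact hτ

lemma star_of_gamma (F : ℂ → ℂ → ℂ) (m : ℝ) (k : ℤ) (P : Set (ℂ × ℂ))
    (γ : Matrix.SpecialLinearGroup (Fin 2) ℤ) (G : ℂ × ℂ → ℂ)
    (hG1 : ∀ p : ℂ × ℂ, p.1.im = 0 → 0 < p.2.im → DifferentiableAt ℂ G p)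
    (hG2 : ∀ p : ℂ × ℂ, 0 < p.2.im →
      (p.1 / (slC γ * p.2 + slD γ), (slA γ * p.2 + slB γ) / (slC γ * p.2 + slD γ)) ∉ P →
      G p = slashAction F m k γ p)
    (p0 : ℂ × ℂ) (h2 : 0 < p0.2.im)
    (hre : (p0.1 / (slA γ - slC γ * p0.2)).im = 0) :
    ∃ H : ℂ × ℂ → ℂ, DifferentiableAt ℂ H p0 ∧
      ∀ q : ℂ × ℂ, 0 < q.2.im → q ∉ P → H q = F q.1 q.2 := by
  have hdet := sl_det γ
  refine ⟨fun T => (slA γ - slC γ * T.2) ^ (-k) *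
      Complex.exp (2 * (Real.pi : ℂ) * Complex.I * (m : ℂ) * slC γ * T.1 ^ 2 /
        (slA γ - slC γ * T.2)) *
      G (T.1 / (slA γ - slC γ * T.2), (slD γ * T.2 - slB γ) / (slA γ - slC γ * T.2)), ?_, ?_⟩
  · -- differentiability at p0
    have hw0 : slA γ - slC γ * p0.2 ≠ 0 := sl_w_ne_zero γ h2
    have hwd : DifferentiableAt ℂ (fun T : ℂ × ℂ => slA γ - slC γ * T.2) p0 := by
      exact (differentiableAt_const _).sub ((differentiableAt_const _).mul differentiableAt_snd)
    have hψd : DifferentiableAt ℂ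
        (fun T : ℂ × ℂ => (T.1 / (slA γ - slC γ * T.2),
          (slD γ * T.2 - slB γ) / (slA γ - slC γ * T.2))) p0 := by
      have hfst : DifferentiableAt ℂ (fun T : ℂ × ℂ => T.1) p0 := differentiableAt_fst
      have hsnd : DifferentiableAt ℂ (fun T : ℂ × ℂ => T.2) p0 := differentiableAt_snd
      have hwinv : DifferentiableAt ℂ (fun T : ℂ × ℂ => (slA γ - slC γ * T.2)⁻¹) p0 :=
        hwd.inv hw0
      apply DifferentiableAt.prodMk
      · simp only [div_eq_mul_inv]
        exact hfst.mul hwinv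
      · simp only [div_eq_mul_inv]
        exact (((differentiableAt_const _).mul hsnd).sub (differentiableAt_const _)).mul hwinv
    have hGd : DifferentiableAt ℂ G
        (p0.1 / (slA γ - slC γ * p0.2), (slD γ * p0.2 - slB γ) / (slA γ - slC γ * p0.2)) :=
      hG1 _ hre (sl_im_psi γ h2)
    refine DifferentiableAt.mul (DifferentiableAt.mul ?_ ?_) (hGd.comp p0 hψd)
    · exact hwd.zpow (Or.inl hw0)
    · have hfst : DifferentiableAt ℂ (fun T : ℂ × ℂ => T.1) p0 := differentiableAt_fst
      have hwinv : DifferentiableAt ℂ (fun T : ℂ × ℂ => (slA γ - slC γ * T.2)⁻¹) p0 :=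
        hwd.inv hw0
      simp only [div_eq_mul_inv]
      exact (((differentiableAt_const _).mul (hfst.pow 2)).mul hwinv).cexp
  · -- equality on the strip minus P
    intro q hq hqP
    have hw : slA γ - slC γ * q.2 ≠ 0 := sl_w_ne_zero γ hq
    set w := slA γ - slC γ * q.2 with hwdef
    set ψ : ℂ × ℂ := (q.1 / w, (slD γ * q.2 - slB γ) / w) with hψdef
    have him2 : 0 < ψ.2.im := sl_im_psi γ hq
    have hDen : slC γ * ψ.2 + slD γ = w⁻¹ := by
      apply eq_inv_of_mul_eq_one_right
      have this2 : ψ.2 * w = slD γ * q.2 - slB γ := by rw [hψdef]; exact div_mul_cancel₀ _ hw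
      linear_combination slC γ * this2 + hdet + slD γ * hwdef
    have himg1 : ψ.1 / (slC γ * ψ.2 + slD γ) = q.1 := by
      rw [hDen, div_inv_eq_mul]
      rw [hψdef]; exact div_mul_cancel₀ q.1 hw
    have himg2 : (slA γ * ψ.2 + slB γ) / (slC γ * ψ.2 + slD γ) = q.2 := by
      rw [hDen, div_inv_eq_mul]
      have this2 : ψ.2 * w = slD γ * q.2 - slB γ := by rw [hψdef]; exact div_mul_cancel₀ _ hw
      linear_combination slA γ * this2 + slB γ * hwdef + q.2 * hdet
    have himg : (ψ.1 / (slC γ * ψ.2 + slD γ), (slA γ * ψ.2 + slB γ) / (slC γ * ψ.2 + slD γ)) = q :=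
      Prod.ext himg1 himg2
    have hGψ : G ψ = slashAction F m k γ ψ := hG2 ψ him2 (by rw [himg]; exact hqP)
    have hgoal : G ψ = w ^ k * Complex.exp
        (-(2 * (Real.pi : ℂ) * Complex.I * (m : ℂ) * slC γ * q.1 ^ 2 / w)) * F q.1 q.2 := by
      rw [hGψ]
      unfold slashAction
      rw [himg1, himg2, hDen]
      congr 1
      congr 1
      · rw [inv_zpow, ← zpow_neg, neg_neg]
      · congr 1
        field_simp [hψdef]
        rw [show ψ.1 = q.1 / w from rfl]; field_simp
    show w ^ (-k) * Complex.exp (2 * (Real.pi : ℂ) * Complex.I * (m : ℂ) * slC γ * q.1 ^ 2 / w)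
        * G ψ = F q.1 q.2
    rw [hgoal, Complex.exp_neg]
    have h1 : w ^ (-k) * (w ^ k : ℂ) = 1 := by
      rw [← zpow_add₀ hw]; simp
    have hE : Complex.exp (2 * (Real.pi : ℂ) * Complex.I * (m : ℂ) * slC γ * q.1 ^ 2 / w) ≠ 0 :=
      Complex.exp_ne_zero _
    set E := Complex.exp (2 * (Real.pi : ℂ) * Complex.I * (m : ℂ) * slC γ * q.1 ^ 2 / w) with hEdef
    calc w ^ (-k) * E * (w ^ k * E⁻¹ * F q.1 q.2)
        = (w ^ (-k) * w ^ k) * (E * E⁻¹) * F q.1 q.2 := by ring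
      _ = F q.1 q.2 := by rw [h1, mul_inv_cancel₀ hE]; ring

lemma dense_aux (P : Set (ℂ × ℂ))
    (hP : P ⊆ {p : ℂ × ℂ | ∃ c d l : ℤ, l ≠ 0 ∧ p.1 = ((c : ℂ) * p.2 + (d : ℂ)) / (l : ℂ)})
    (p : ℂ × ℂ) (hp : 0 < p.2.im) : p ∈ closure ({q : ℂ × ℂ | 0 < q.2.im} \ P) := by
  rw [Metric.mem_closure_iff]
  intro ε hε
  have hcount : {s : ℝ | (p.1 + (s : ℂ), p.2) ∈ P}.Countable := by
    have hsub : {s : ℝ | (p.1 + (s : ℂ), p.2) ∈ P} ⊆ (fun s : ℝ => (s : ℂ)) ⁻¹'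
        (Set.range (fun cdl : ℤ × ℤ × ℤ =>
          (((cdl.1 : ℂ) * p.2 + (cdl.2.1 : ℂ)) / (cdl.2.2 : ℂ)) - p.1)) := by
      intro s hs
      obtain ⟨c, d, l, hl, he⟩ := hP hs
      refine ⟨(c, d, l), ?_⟩
      simp only at he ⊢
      rw [← he]; ring
    exact Set.Countable.mono hsub
      ((Set.countable_range _).preimage Complex.ofReal_injective)
  have hne : ((Set.Ioo (0 : ℝ) ε) \ {s : ℝ | (p.1 + (s : ℂ), p.2) ∈ P}).Nonempty := by
    by_contra h
    rw [Set.not_nonempty_iff_eq_empty, Set.diff_eq_empty] at h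
    have hc2 := (hcount.mono h).le_aleph0
    rw [Cardinal.mk_Ioo_real hε] at hc2
    exact absurd hc2 Cardinal.aleph0_lt_continuum.not_ge
  obtain ⟨s, ⟨hs0, hsε⟩, hsB⟩ := hne
  refine ⟨(p.1 + (s : ℂ), p.2), ⟨hp, fun hmem => hsB hmem⟩, ?_⟩
  rw [Prod.dist_eq]
  apply max_lt
  · simp only [Complex.dist_eq]
    have : p.1 - (p.1 + (s : ℂ)) = -(s : ℂ) := by ring
    rw [this]
    simpa [abs_of_pos hs0] using hsε
  · simpa using hε

lemma int_linear_ne_zero {a b : ℤ} (hab : ¬(a = 0 ∧ b = 0)) {τ : ℂ} (hτ : 0 < τ.im) :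
    (a : ℂ) * τ + (b : ℂ) ≠ 0 := by
  intro hz
  by_cases ha : a = 0
  · rw [ha] at hz
    simp at hz
    exact hab ⟨ha, by exact_mod_cast hz⟩
  · have him : ((a : ℂ) * τ + (b : ℂ)).im = (a : ℝ) * τ.im := by
      simp [Complex.add_im, Complex.mul_im]
    rw [hz] at him
    simp at him
    rcases him with h | h
    · exact ha (by exact_mod_cast h)
    · linarith

/-- Let `F` be a meromorphic Jacobi form of index `m` and weight `k` over `L ⋊ Γ`, whose
polar set `P ⊆ ℂ × H` is contained in the union of the divisors `t = (cτ+d)/l`, `l ≠ 0`.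
If for every `γ ∈ SL(2,ℤ)` the transformed function `F(γ(t,τ))|_{m,k}` is holomorphic at
all points of `ℝ × H` (i.e. extends holomorphically there), then `F` is holomorphic on
all of `ℂ × H` (i.e. extends to a holomorphic function on `ℂ × H`). -/
theorem meromorphic_jacobi_form_holomorphic
    (F : ℂ → ℂ → ℂ) (m : ℝ) (k : ℤ)
    (Γ : Subgroup (Matrix.SpecialLinearGroup (Fin 2) ℤ))
    (L : AddSubgroup (ℤ × ℤ))
    (P : Set (ℂ × ℂ))
    (hP : P ⊆ {p : ℂ × ℂ | ∃ c d l : ℤ, l ≠ 0 ∧ p.1 = ((c : ℂ) * p.2 + (d : ℂ)) / (l : ℂ)})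
    (hF : DifferentiableOn ℂ (fun p : ℂ × ℂ => F p.1 p.2) ({p : ℂ × ℂ | 0 < p.2.im} \ P))
    (hmod : ∀ γ ∈ Γ, ∀ t τ : ℂ, 0 < τ.im → (t, τ) ∉ P →
      F (t / (slC γ * τ + slD γ)) ((slA γ * τ + slB γ) / (slC γ * τ + slD γ)) =
        (slC γ * τ + slD γ) ^ k *
          Complex.exp (2 * (Real.pi : ℂ) * Complex.I * (m : ℂ) * slC γ * t ^ 2 /
            (slC γ * τ + slD γ)) * F t τ)
    (hell : ∀ l ∈ L, ∀ t τ : ℂ, 0 < τ.im → (t, τ) ∉ P →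
      F (t + (l.1 : ℂ) * τ + (l.2 : ℂ)) τ =
        Complex.exp (-(2 * (Real.pi : ℂ) * Complex.I * (m : ℂ) *
          ((l.1 : ℂ) ^ 2 * τ + 2 * (l.1 : ℂ) * t))) * F t τ)
    (hhol : ∀ γ : Matrix.SpecialLinearGroup (Fin 2) ℤ, ∃ G : ℂ × ℂ → ℂ,
      (∀ p : ℂ × ℂ, p.1.im = 0 → 0 < p.2.im → DifferentiableAt ℂ G p) ∧
      (∀ p : ℂ × ℂ, 0 < p.2.im →
        (p.1 / (slC γ * p.2 + slD γ),
          (slA γ * p.2 + slB γ) / (slC γ * p.2 + slD γ)) ∉ P →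
        G p = slashAction F m k γ p)) :
    ∃ G : ℂ × ℂ → ℂ,
      DifferentiableOn ℂ G {p : ℂ × ℂ | 0 < p.2.im} ∧
      ∀ p : ℂ × ℂ, 0 < p.2.im → p ∉ P → G p = F p.1 p.2 := by
  classical
  set S : Set (ℂ × ℂ) := {p : ℂ × ℂ | 0 < p.2.im} \ P with hSdef
  have hOpen : IsOpen {p : ℂ × ℂ | 0 < p.2.im} :=
    isOpen_lt continuous_const (Complex.continuous_im.comp continuous_snd)
  have hdense : ∀ p : ℂ × ℂ, 0 < p.2.im → p ∈ closure S := fun p hp => dense_aux P hP p hp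
  have hNe : ∀ q : ℂ × ℂ, 0 < q.2.im → (nhdsWithin q S).NeBot :=
    fun q hq => mem_closure_iff_nhdsWithin_neBot.mp (hdense q hq)
  -- the local extension property
  have star : ∀ p0 : ℂ × ℂ, 0 < p0.2.im → ∃ H : ℂ × ℂ → ℂ,
      DifferentiableAt ℂ H p0 ∧ ∀ q : ℂ × ℂ, 0 < q.2.im → q ∉ P → H q = F q.1 q.2 := by
    intro p0 h2
    by_cases hp0 : p0 ∈ P
    · obtain ⟨c, d, l, hl, ht⟩ := hP hp0
      by_cases hcd : c = 0 ∧ d = 0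
      · obtain ⟨G, hG1, hG2⟩ := hhol 1
        apply star_of_gamma F m k P 1 G hG1 hG2 p0 h2
        have h1 : p0.1 = 0 := by rw [ht, hcd.1, hcd.2]; simp
        rw [h1]
        simp
      · have hgpos : 0 < Int.gcd c d := Int.gcd_pos_iff.mpr (not_and_or.mp hcd)
        set g : ℤ := (Int.gcd c d : ℤ) with hgdef
        set c' : ℤ := c / g with hc'def
        set d' : ℤ := d / g with hd'def
        have hc : g * c' = c := Int.mul_ediv_cancel' (Int.gcd_dvd_left c d)
        have hd : g * d' = d := Int.mul_ediv_cancel' (Int.gcd_dvd_right c d)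
        have hcop : Int.gcd c' d' = 1 := Int.gcd_div_gcd_div_gcd hgpos
        obtain ⟨u, v, huv⟩ := Int.isCoprime_iff_gcd_eq_one.mpr hcop
        have hdet : d' * v - u * (-c') = 1 := by linear_combination huv
        obtain ⟨G, hG1, hG2⟩ := hhol (mkSL d' u (-c') v hdet)
        apply star_of_gamma F m k P (mkSL d' u (-c') v hdet) G hG1 hG2 p0 h2
        rw [slA_mk, slC_mk]
        have hcd' : ¬(c' = 0 ∧ d' = 0) := by
          rintro ⟨h1, h2'⟩
          rw [h1, h2'] at hcop
          simp at hcop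
        have hne2 : (c' : ℂ) * p0.2 + (d' : ℂ) ≠ 0 := int_linear_ne_zero hcd' h2
        have hlne : (l : ℂ) ≠ 0 := by exact_mod_cast hl
        have hcC : (c : ℂ) = (g : ℂ) * (c' : ℂ) := by rw [← hc]; push_cast; ring
        have hdC : (d : ℂ) = (g : ℂ) * (d' : ℂ) := by rw [← hd]; push_cast; ring
        have hne2' : (d' : ℂ) - -(c' : ℂ) * p0.2 ≠ 0 := by
          intro hz
          apply hne2
          linear_combination hz
        have hval : p0.1 / ((d' : ℂ) - ((-c' : ℤ) : ℂ) * p0.2) = (g : ℂ) / (l : ℂ) := by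
          push_cast
          rw [ht, hcC, hdC, div_div]
          rw [div_eq_div_iff (mul_ne_zero hlne hne2') hlne]
          ring
        rw [hval]
        simp [Complex.div_im]
    · -- p0 off the polar set : use interior differentiability within S
      have hdW := hF p0 ⟨h2, hp0⟩
      have hL := hdW.hasFDerivWithinAt
      set L0 := fderivWithin ℂ (fun p : ℂ × ℂ => F p.1 p.2) S p0 with hL0def
      have hp0S : p0 ∈ S := ⟨h2, hp0⟩
      refine ⟨fun q => if q ∈ S then F q.1 q.2 else F p0.1 p0.2 + L0 (q - p0), ?_, ?_⟩
      · apply HasFDerivAt.differentiableAt (f' := L0)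
        apply HasFDerivAt.of_isLittleO
        rw [Asymptotics.isLittleO_iff]
        intro cc hcc
        have hev := Asymptotics.isLittleO_iff.mp hL.isLittleO hcc
        rw [eventually_nhdsWithin_iff] at hev
        filter_upwards [hev] with q hq
        by_cases hqS : q ∈ S
        · have hb := hq hqS
          simpa only [if_pos hqS, if_pos hp0S] using hb
        · rw [if_neg hqS, if_pos hp0S]
          have hz : F p0.1 p0.2 + L0 (q - p0) - F p0.1 p0.2 - L0 (q - p0) = 0 := by ring
          rw [hz]
          simp only [norm_zero]
          positivity
      · intro q hq hqP
        have hqS : q ∈ S := ⟨hq, hqP⟩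
        simp only [if_pos hqS]
  -- the global extension
  set Ff : ℂ × ℂ → ℂ := fun x => F x.1 x.2 with hFfdef
  set G : ℂ × ℂ → ℂ := fun q =>
    if q ∈ P then Filter.limUnder (nhdsWithin q S) Ff else F q.1 q.2 with hGdef
  have hGval : ∀ q : ℂ × ℂ,
      G q = if q ∈ P then Filter.limUnder (nhdsWithin q S) Ff else F q.1 q.2 := fun _ => rfl
  have valG : ∀ q : ℂ × ℂ, 0 < q.2.im → ∀ H' : ℂ × ℂ → ℂ, DifferentiableAt ℂ H' q →
      (∀ x : ℂ × ℂ, 0 < x.2.im → x ∉ P → H' x = F x.1 x.2) → G q = H' q := by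
    intro q hq H' hH'd hH'eq
    rw [hGval]
    by_cases hqP : q ∈ P
    · rw [if_pos hqP]
      haveI := hNe q hq
      have htend : Filter.Tendsto Ff (nhdsWithin q S) (nhds (H' q)) := by
        apply Filter.Tendsto.congr' _ (hH'd.continuousAt.continuousWithinAt (s := S))
        filter_upwards [self_mem_nhdsWithin] with x hx
        exact hH'eq x hx.1 hx.2
      exact htend.limUnder_eq
    · rw [if_neg hqP]
      exact (hH'eq q hq hqP).symm
  refine ⟨G, ?_, ?_⟩
  · intro p0 hp0m
    have h2 : 0 < p0.2.im := hp0m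
    obtain ⟨H, hHd, hHeq⟩ := star p0 h2
    apply DifferentiableAt.differentiableWithinAt
    have hGp0 : G p0 = H p0 := valG p0 h2 H hHd hHeq
    set LH := fderiv ℂ H p0 with hLHdef
    apply HasFDerivAt.differentiableAt (f' := LH)
    apply HasFDerivAt.of_isLittleO
    rw [Asymptotics.isLittleO_iff]
    intro cc hcc
    have hstripE : ∀ᶠ x : ℂ × ℂ in nhds p0, 0 < x.2.im := by
      filter_upwards [hOpen.mem_nhds hp0m] with x hx
      exact hx
    have hHlo := Asymptotics.isLittleO_iff.mp hHd.hasFDerivAt.isLittleO (half_pos hcc)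
    obtain ⟨δ, hδpos, hδ⟩ := Metric.eventually_nhds_iff.mp (hHlo.and hstripE)
    filter_upwards [Metric.ball_mem_nhds p0 (half_pos hδpos)] with q hqball
    have hqd : dist q p0 < δ / 2 := Metric.mem_ball.mp hqball
    have hqδ := hδ (lt_of_lt_of_le hqd (half_le_self hδpos.le))
    have hq2 : 0 < q.2.im := hqδ.2
    rw [hGp0]
    by_cases hqP : q ∈ P
    · obtain ⟨Hq, hHqd, hHqeq⟩ := star q hq2
      haveI := hNe q hq2
      have htendq : Filter.Tendsto Ff (nhdsWithin q S) (nhds (Hq q)) := by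
        apply Filter.Tendsto.congr' _ (hHqd.continuousAt.continuousWithinAt (s := S))
        filter_upwards [self_mem_nhdsWithin] with x hx
        exact hHqeq x hx.1 hx.2
      have hGq : G q = Hq q := by
        rw [hGval, if_pos hqP]
        exact htendq.limUnder_eq
      rw [hGq]
      have hbound : ∀ᶠ x in nhdsWithin q S, ‖Ff x - H p0 - LH (x - p0)‖ ≤ cc / 2 * ‖x - p0‖ := by
        have hball : Metric.ball q (δ / 2) ∈ nhdsWithin q S :=
          nhdsWithin_le_nhds (Metric.ball_mem_nhds q (half_pos hδpos))
        filter_upwards [hball, self_mem_nhdsWithin] with x hxball hxS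
        have hdx : dist x p0 < δ := by
          calc dist x p0 ≤ dist x q + dist q p0 := dist_triangle _ _ _
            _ < δ / 2 + δ / 2 := add_lt_add hxball hqd
            _ = δ := by ring
        have hb := (hδ hdx).1
        rw [hHeq x hxS.1 hxS.2] at hb
        exact hb
      have h1t : Filter.Tendsto (fun x : ℂ × ℂ => ‖Ff x - H p0 - LH (x - p0)‖)
          (nhdsWithin q S) (nhds ‖Hq q - H p0 - LH (q - p0)‖) := by
        apply Filter.Tendsto.norm
        apply Filter.Tendsto.sub
        · exact htendq.sub tendsto_const_nhds
        · exact ((LH.continuous.comp (continuous_id.sub continuous_const)).tendsto q).mono_left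
            nhdsWithin_le_nhds
      have h2t : Filter.Tendsto (fun x : ℂ × ℂ => cc / 2 * ‖x - p0‖)
          (nhdsWithin q S) (nhds (cc / 2 * ‖q - p0‖)) :=
        ((continuous_const.mul ((continuous_id.sub continuous_const).norm)).tendsto q).mono_left
          nhdsWithin_le_nhds
      have hle := le_of_tendsto_of_tendsto h1t h2t hbound
      calc ‖Hq q - H p0 - LH (q - p0)‖ ≤ cc / 2 * ‖q - p0‖ := hle
        _ ≤ cc * ‖q - p0‖ := by
          apply mul_le_mul_of_nonneg_right (by linarith) (norm_nonneg _)
    · have hqS : q ∈ S := ⟨hq2, hqP⟩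
      have hGq : G q = F q.1 q.2 := by rw [hGval, if_neg hqP]
      rw [hGq]
      have hb := (hδ (lt_of_lt_of_le hqd (half_le_self hδpos.le))).1
      rw [hHeq q hq2 hqP] at hb
      calc ‖F q.1 q.2 - H p0 - LH (q - p0)‖ ≤ cc / 2 * ‖q - p0‖ := hb
        _ ≤ cc * ‖q - p0‖ := by
          apply mul_le_mul_of_nonneg_right (by linarith) (norm_nonneg _)
  · intro p h2 hp
    rw [hGval, if_neg hp]
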